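/- For every integer k ≥ 8 there exist an integer n with n ≤ k + (1/2)·log₂ k + 5 and a set C ⊆ {0,1}^n with |C| ≥ 2^k such that the map s ↦ C(s) is injective on C (i.e., C is a reconstruction code of length n encoding k information bits with redundancy at most (1/2)·log₂ k + 5). -/

import Mathlib

/-- The composition of a binary string: the pair (number of 0s, number of 1s).
Here `false` represents the bit 0 and `true` the bit 1. -/
def comp (w : List Bool) : ℕ × ℕ := (w.count false, w.count true)

/-- The multiset of compositions of all contiguous substrings of `s` of length `l`. -/
def compLen (l : ℕ) (s : List Bool) : Multiset (ℕ × ℕ) :=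
  ↑((List.range (s.length + 1 - l)).map fun i => comp ((s.drop i).take l))

/-- The composition multiset `C(s)`: compositions of all contiguous substrings of `s`. -/
def compMS (s : List Bool) : Multiset (ℕ × ℕ) :=
  ↑((List.range s.length).flatMap fun i =>
    (List.range (s.length - i)).map fun j => comp ((s.drop i).take (j + 1)))

/-- A single composition error: one element `(z,w)` of `M` is replaced by a
pair `(z',w')` with the same length `z'+w' = z+w`. -/
def OneErr (M M' : Multiset (ℕ × ℕ)) : Prop :=
  ∃ z w z' w' : ℕ, (z, w) ∈ M ∧ z + w = z' + w' ∧
    M' = M - {(z, w)} + {(z', w')}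

/-- `AtMostErr t M D`: `D` is obtained from `M` by at most `t` composition errors. -/
def AtMostErr : ℕ → Multiset (ℕ × ℕ) → Multiset (ℕ × ℕ) → Prop
  | 0, M, D => M = D
  | t + 1, M, D => M = D ∨ ∃ M', OneErr M M' ∧ AtMostErr t M' D

/-- The sub-multiset of elements (compositions) of length `l`. -/
def lenPart (l : ℕ) (M : Multiset (ℕ × ℕ)) : Multiset (ℕ × ℕ) :=
  M.filter fun p => p.1 + p.2 = l

/-- `D` is the result of at most `t` *asymmetric* composition errors in `C(s)`,
for a string of length `n`: additionally, for each `1 ≤ i ≤ ⌊n/2⌋`, at most one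
of the two sub-multisets of lengths `i` and `n+1-i` is altered. -/
def AsymErr (t n : ℕ) (s : List Bool) (D : Multiset (ℕ × ℕ)) : Prop :=
  AtMostErr t (compMS s) D ∧
  ∀ i, 1 ≤ i → i ≤ n / 2 →
    lenPart i D ≠ compLen i s → lenPart (n + 1 - i) D = compLen (n + 1 - i) s

/-- A Catalan-Bertrand string: every nonempty prefix has strictly more 0s than 1s. -/
def IsCB (w : List Bool) : Prop :=
  ∀ j, 1 ≤ j → j ≤ w.length → (w.take j).count true < (w.take j).count false

/-- The reconstruction code `S_R(n)` for even `n`: `s_1 = 0`, `s_n = 1`, and the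
subsequence of `s` indexed by the positions `i ∈ {1,…,n/2}` with `s_i ≠ s_{n+1-i}`
(in increasing order) is a Catalan-Bertrand string (indices here are 0-based). -/
def SReven (n : ℕ) : Set (List Bool) :=
  { s | s.length = n ∧ s.getD 0 false = false ∧ s.getD (n - 1) false = true ∧
    IsCB (((List.range (n / 2)).filter fun i =>
        s.getD i false != s.getD (n - 1 - i) false).map fun i => s.getD i false) }

/-- The reconstruction code `S_R(n)`: for odd `n`, obtained from `S_R(n-1)` by
inserting an arbitrary middle bit. -/
def SR (n : ℕ) : Set (List Bool) :=
  if Even n then SReven n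
  else { s | ∃ v ∈ SReven (n - 1), ∃ b : Bool,
      s = v.take ((n - 1) / 2) ++ [b] ++ v.drop ((n - 1) / 2) }

/-- The cumulative weight `w_l(s)`: total number of 1s over all length-`l`
contiguous substrings of `s`. -/
def cumW (l : ℕ) (s : List Bool) : ℕ :=
  ∑ i ∈ Finset.range (s.length + 1 - l), ((s.drop i).take l).count true

/-- `σ_i(s) = s_i + s_{n+1-i}` for `1 ≤ i ≤ ⌊n/2⌋`, and `σ_{⌈n/2⌉}(s) = s_{⌈n/2⌉}`
for odd `n` (1-based indexing in the mathematical description). -/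
def sigmaSeq (s : List Bool) (i : ℕ) : ℕ :=
  if 2 * i ≤ s.length then
    (if s.getD (i - 1) false then 1 else 0) +
      (if s.getD (s.length - i) false then 1 else 0)
  else (if s.getD (i - 1) false then 1 else 0)

namespace RCA

lemma count_add_length (w : List Bool) : w.count true + w.count false = w.length := by
  induction w with
  | nil => simp
  | cons a t ih => cases a <;> simp [List.count_cons] <;> omega

lemma comp_append (a b : List Bool) : comp (a ++ b) = comp a + comp b := by
  simp [comp, Prod.ext_iff, List.count_append]

lemma comp_snd (w : List Bool) : (comp w).2 = w.count true := rfl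

lemma comp_eq_of {a b : List Bool} (hl : a.length = b.length)
    (h : a.count true = b.count true) : comp a = comp b := by
  have ha := count_add_length a; have hb := count_add_length b
  refine Prod.ext ?_ h
  show a.count false = b.count false
  omega

lemma comp_split (s : List Bool) (i l : ℕ) :
    comp (s.take i) + comp ((s.drop i).take l) + comp (s.drop (i + l)) = comp s := by
  have h1 : comp s = comp (s.take i) + comp (s.drop i) := by
    rw [← comp_append, List.take_append_drop]
  have h2 : comp (s.drop i) = comp ((s.drop i).take l) + comp ((s.drop i).drop l) := by
    rw [← comp_append, List.take_append_drop]
  rw [List.drop_drop] at h2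
  rw [h1, h2, add_assoc]

lemma comp_split2 (s : List Bool) (i : ℕ) :
    comp (s.take i) + comp (s.drop i) = comp s := by
  rw [← comp_append, List.take_append_drop]

lemma flatMap_congr {α β : Type*} {l : List α} {f g : α → List β}
    (h : ∀ a ∈ l, f a = g a) : l.flatMap f = l.flatMap g := by
  induction l with
  | nil => rfl
  | cons a t ih =>
    simp only [List.flatMap_cons]
    rw [h a (by simp), ih (fun x hx => h x (by simp [hx]))]

lemma filter_flatMap {α β : Type*} (l : List α) (f : α → List β) (p : β → Bool) :
    (l.flatMap f).filter p = l.flatMap fun a => (f a).filter p := by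
  induction l with
  | nil => rfl
  | cons a t ih => simp [List.flatMap_cons, List.filter_append, ih]

lemma flatMap_sing {α β : Type*} (l : List α) (f : α → β) :
    l.flatMap (fun x => [f x]) = l.map f := by
  induction l with
  | nil => rfl
  | cons a t ih => simp [List.flatMap_cons, ih]

lemma range_filter_eq (M c : ℕ) :
    (List.range M).filter (fun j => decide (j = c)) = if c < M then [c] else [] := by
  rw [List.filter_eq]
  by_cases h : c < M
  · rw [if_pos h, List.count_eq_one_of_mem List.nodup_range (List.mem_range.mpr h)]
    rfl
  · rw [if_neg h, List.count_eq_zero_of_not_mem (by simpa using h)]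
    rfl

lemma flatMap_if {α : Type*} (f : ℕ → α) : ∀ N K, K ≤ N →
    (List.range N).flatMap (fun i => if i < K then [f i] else []) = (List.range K).map f := by
  intro N
  induction N with
  | zero => intro K hK; have : K = 0 := by omega
            subst this; rfl
  | succ N ih =>
    intro K hK
    rcases eq_or_lt_of_le hK with h | h
    · subst h
      rw [flatMap_congr (g := fun i => [f i]) (fun a ha => if_pos (List.mem_range.mp ha)),
        flatMap_sing]
    · have hKN : K ≤ N := by omega
      rw [List.range_succ, List.flatMap_append, ih K hKN]
      simp [if_neg (by omega : ¬ N < K)]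

lemma arith1 (n l i : ℕ) (hl : 1 ≤ l) (h2 : i < n + 1 - l) : l - 1 < n - i := by omega
lemma arith2 (n l i : ℕ) (hl : 1 ≤ l) (h2 : ¬ i < n + 1 - l) : ¬ l - 1 < n - i := by omega
lemma arith3 (l : ℕ) (hl : 1 ≤ l) : l - 1 + 1 = l := by omega
lemma arith4 (n l : ℕ) (hl : 1 ≤ l) : n + 1 - l ≤ n := by omega

lemma compLen_filter (s : List Bool) (l : ℕ) (hl : 1 ≤ l) :
    Multiset.filter (fun p => p.1 + p.2 = l) (compMS s) = compLen l s := by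
  classical
  rw [compMS, Multiset.filter_coe, filter_flatMap]
  have hstep : ∀ i ∈ List.range s.length,
      (((List.range (s.length - i)).map fun j => comp ((s.drop i).take (j + 1))).filter
          (fun p => decide (p.1 + p.2 = l)))
        = if i < s.length + 1 - l then [comp ((s.drop i).take l)] else [] := by
    intro i hi
    rw [List.filter_map]
    simp only [Function.comp_def]
    have hcongr : ((List.range (s.length - i)).filter
        (fun j => decide ((comp ((s.drop i).take (j + 1))).1 + (comp ((s.drop i).take (j + 1))).2 = l)))
        = ((List.range (s.length - i)).filter (fun j => decide (j = l - 1))) := by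
      apply List.filter_congr
      intro j hj
      have hj' := List.mem_range.mp hj
      have hlen : ((s.drop i).take (j + 1)).length = j + 1 := by
        rw [List.length_take, List.length_drop]
        have := List.mem_range.mp hi
        omega
      have hcc := count_add_length ((s.drop i).take (j + 1))
      have heq1 : (comp ((s.drop i).take (j + 1))).1 + (comp ((s.drop i).take (j + 1))).2 = j + 1 := by
        simp only [comp]; omega
      rw [heq1]
      simp only [decide_eq_decide]
      omega
    rw [hcongr, range_filter_eq]
    clear hcongr
    rcases Nat.lt_or_ge i (s.length + 1 - l) with h2 | h2
    · rw [if_pos (arith1 s.length l i hl h2), if_pos h2]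
      simp only [List.map_cons, List.map_nil]
      rw [arith3 l hl]
    · rw [if_neg (arith2 s.length l i hl (Nat.not_lt.mpr h2)), if_neg (Nat.not_lt.mpr h2)]
      rfl
  rw [flatMap_congr hstep, flatMap_if _ s.length (s.length + 1 - l) (arith4 s.length l hl)]
  rfl

lemma compLen_eq {s v : List Bool} (h : compMS s = compMS v) (l : ℕ) (hl : 1 ≤ l) :
    compLen l s = compLen l v := by
  rw [← compLen_filter s l hl, ← compLen_filter v l hl, h]

lemma pair_cases {α : Type*} {a b c d : α} (h : ({a, b} : Multiset α) = {c, d}) :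
    (a = c ∧ b = d) ∨ (a = d ∧ b = c) := by
  have ha : a ∈ ({c, d} : Multiset α) := by rw [← h]; simp
  simp only [Multiset.insert_eq_cons, Multiset.mem_cons, Multiset.mem_singleton] at ha
  rcases ha with rfl | rfl
  · left
    refine ⟨rfl, ?_⟩
    rw [show ({a, b} : Multiset α) = a ::ₘ {b} from rfl,
      show ({a, d} : Multiset α) = a ::ₘ {d} from rfl, Multiset.cons_inj_right] at h
    simpa using h
  · right
    refine ⟨rfl, ?_⟩
    rw [Multiset.pair_comm c a] at h
    rw [show ({a, b} : Multiset α) = a ::ₘ {b} from rfl,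
      show ({a, c} : Multiset α) = a ::ₘ {c} from rfl, Multiset.cons_inj_right] at h
    simpa using h

lemma eq_of_comp_take : ∀ (s v : List Bool), s.length = v.length →
    (∀ j, comp (s.take j) = comp (v.take j)) → s = v := by
  intro s
  induction s with
  | nil =>
    intro v hl _
    cases v with
    | nil => rfl
    | cons b u => simp at hl
  | cons a t ih =>
    intro v hl hc
    cases v with
    | nil => simp at hl
    | cons b u =>
      have h1 := hc 1
      rw [List.take_succ_cons, List.take_succ_cons, List.take_zero] at h1
      have hab : a = b := by
        cases a <;> cases b <;> first
          | rfl
          | (exfalso; simp [comp, Prod.ext_iff] at h1)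
      subst hab
      have ht : t = u := by
        apply ih u (by simpa using hl)
        intro j
        have h2 := hc (j + 1)
        rw [List.take_succ_cons, List.take_succ_cons] at h2
        have hx : ∀ x : List Bool, comp (a :: x) = comp [a] + comp x := by
          intro x; rw [show a :: x = [a] ++ x from rfl, comp_append]
        rw [hx (t.take j), hx (u.take j)] at h2
        exact add_left_cancel h2
      rw [ht]

lemma drop_all (x : List Bool) {l : ℕ} (h : x.length ≤ l) : x.drop l = [] :=
  List.drop_eq_nil_of_le h

lemma take_all (x : List Bool) {l : ℕ} (h : x.length ≤ l) : x.take l = x :=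
  List.take_of_length_le h

lemma main_inj (m : ℕ) (s v : List Bool)
    (hs : s.length = 2 * m) (hv : v.length = 2 * m)
    (hcs : ∀ j ≤ m, (s.take j).count true ≤ (s.drop (2 * m - j)).count true)
    (hcv : ∀ j ≤ m, (v.take j).count true ≤ (v.drop (2 * m - j)).count true)
    (h : compMS s = compMS v) : s = v := by
  rcases Nat.eq_zero_or_pos m with rfl | hm
  · have h0 : s = [] := List.length_eq_zero_iff.mp (by omega)
    have h1 : v = [] := List.length_eq_zero_iff.mp (by omega)
    rw [h0, h1]
  have hw : comp s = comp v := by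
    have hT := compLen_eq h (2 * m) (by omega)
    rw [compLen, compLen, hs, hv] at hT
    have e1 : 2 * m + 1 - 2 * m = 1 := by omega
    have e2 : List.range 1 = [0] := by decide
    rw [e1, e2] at hT
    simp only [List.map_cons, List.map_nil, List.drop_zero] at hT
    rw [take_all s (le_of_eq hs), take_all v (le_of_eq hv)] at hT
    rw [Multiset.coe_singleton, Multiset.coe_singleton] at hT
    exact Multiset.singleton_inj.mp hT
  have key : ∀ j, j ≤ 2 * m →
      comp (s.take j) = comp (v.take j) ∧
      comp (s.drop (2 * m - j)) = comp (v.drop (2 * m - j)) := by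
    intro j
    induction j using Nat.strong_induction_on with
    | _ j IH =>
    intro hjn
    rcases Nat.eq_zero_or_pos j with rfl | hj1
    · refine ⟨by simp, ?_⟩
      have e : 2 * m - 0 = 2 * m := by omega
      rw [e, drop_all s (le_of_eq hs), drop_all v (le_of_eq hv)]
    by_cases hjtop : j = 2 * m
    · subst hjtop
      refine ⟨?_, ?_⟩
      · rw [take_all s (le_of_eq hs), take_all v (le_of_eq hv)]; exact hw
      · rw [Nat.sub_self]
        simpa using hw
    have hjlt : j < 2 * m := by omega
    obtain ⟨j', rfl⟩ : ∃ j', j = j' + 1 := ⟨j - 1, by omega⟩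
    obtain ⟨l, hldef⟩ : ∃ l, 2 * m - (j' + 1) = l := ⟨_, rfl⟩
    have hl1 : 1 ≤ l := by omega
    have hTl := compLen_eq h l hl1
    have hrw : ∀ x : List Bool, x.length = 2 * m →
        compLen l x = ↑((List.range (j' + 2)).map fun i => comp ((x.drop i).take l)) := by
      intro x hx
      rw [compLen, hx]
      have e : 2 * m + 1 - l = j' + 2 := by omega
      rw [e]
    rw [hrw s hs, hrw v hv] at hTl
    have hid : ∀ (x : List Bool), x.length = 2 * m → ∀ i, i ≤ j' + 1 →
        comp (x.take i) + comp ((x.drop i).take l) + comp (x.drop (2 * m - (j' + 1 - i)))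
          = comp x := by
      intro x hx i hi
      have hsplit := comp_split x i l
      have e : i + l = 2 * m - (j' + 1 - i) := by omega
      rw [e] at hsplit
      exact hsplit
    have hmid : ∀ i ∈ List.range j',
        comp ((s.drop (i + 1)).take l) = comp ((v.drop (i + 1)).take l) := by
      intro i hi
      have hilt := List.mem_range.mp hi
      have h1 := hid s hs (i + 1) (by omega)
      have h2 := hid v hv (i + 1) (by omega)
      have hp := (IH (i + 1) (by omega) (by omega)).1
      have hq := (IH (j' + 1 - (i + 1)) (by omega) (by omega)).2
      rw [hp, hq, hw] at h1
      exact add_left_cancel (add_right_cancel (h1.trans h2.symm))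
    have hrangeList : List.range (j' + 2) = 0 :: ((List.range j').map Nat.succ ++ [j' + 1]) := by
      rw [List.range_succ_eq_map, List.range_succ, List.map_append]
      simp
    rw [hrangeList] at hTl
    simp only [List.map_cons, List.map_nil, List.map_append, List.map_map, Function.comp_def,
      Nat.succ_eq_add_one, List.drop_zero] at hTl
    have hds : (s.drop (j' + 1)).take l = s.drop (j' + 1) :=
      take_all _ (by rw [List.length_drop, hs]; omega)
    have hdv : (v.drop (j' + 1)).take l = v.drop (j' + 1) :=
      take_all _ (by rw [List.length_drop, hv]; omega)
    rw [hds, hdv] at hTl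
    have coeEq : ∀ (a b : ℕ × ℕ) (L : List (ℕ × ℕ)),
        (↑(a :: (L ++ [b])) : Multiset (ℕ × ℕ)) = {a, b} + ↑L := by
      intro a b L
      have h2 : ({a, b} : Multiset (ℕ × ℕ)) + ↑L = ↑(a :: b :: L) := by
        rw [Multiset.insert_eq_cons, Multiset.cons_add, Multiset.singleton_add,
          Multiset.cons_coe, Multiset.cons_coe]
      rw [h2]
      exact Multiset.coe_eq_coe.mpr (List.Perm.cons a (List.perm_append_singleton b L))
    rw [coeEq, coeEq] at hTl
    have hmideq : (List.range j').map (fun i => comp ((s.drop (i + 1)).take l))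
        = (List.range j').map (fun i => comp ((v.drop (i + 1)).take l)) :=
      List.map_congr_left hmid
    rw [hmideq] at hTl
    have hpair := add_right_cancel hTl
    have stepA : comp (s.take l) = comp (v.take l) →
        comp (s.drop (j' + 1)) = comp (v.drop (j' + 1)) →
        comp (s.take (j' + 1)) = comp (v.take (j' + 1)) ∧
        comp (s.drop (2 * m - (j' + 1))) = comp (v.drop (2 * m - (j' + 1))) := by
      intro hA0 hAj
      constructor
      · have h1 := comp_split2 s (j' + 1)
        have h2 := comp_split2 v (j' + 1)
        rw [hAj, hw] at h1
        exact add_right_cancel (h1.trans h2.symm)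
      · rw [hldef]
        have h1 := comp_split2 s l
        have h2 := comp_split2 v l
        rw [hA0, hw] at h1
        exact add_left_cancel (h1.trans h2.symm)
    rcases pair_cases hpair with ⟨hA0, hAj⟩ | ⟨hX0, hXj⟩
    · exact stepA hA0 hAj
    by_cases hjm : j' + 1 ≤ m
    · -- code case
      have h1 := comp_split2 s (j' + 1)
      rw [hXj] at h1
      have h2 := comp_split2 v l
      have hA : comp (s.take (j' + 1)) = comp (v.drop l) := by
        have h3 : comp (s.take (j' + 1)) + comp (v.take l)
            = comp (v.drop l) + comp (v.take l) := by
          rw [h1, hw, ← h2, add_comm]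
        exact add_right_cancel h3
      have h4 := comp_split2 v (j' + 1)
      rw [← hX0] at h4
      have h5 := comp_split2 s l
      have hB : comp (v.take (j' + 1)) = comp (s.drop l) := by
        have h6 : comp (v.take (j' + 1)) + comp (s.take l)
            = comp (s.drop l) + comp (s.take l) := by
          rw [h4, ← hw, ← h5, add_comm]
        exact add_right_cancel h6
      have c1 : (s.take (j' + 1)).count true = (v.drop l).count true :=
        congrArg Prod.snd hA
      have c2 : (v.take (j' + 1)).count true = (s.drop l).count true :=
        congrArg Prod.snd hB
      have hc1 := hcs (j' + 1) hjm
      have hc2 := hcv (j' + 1) hjm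
      rw [hldef] at hc1 hc2
      have e1 : (s.take (j' + 1)).count true = (v.take (j' + 1)).count true := by omega
      have e2 : (s.drop l).count true = (v.drop l).count true := by omega
      constructor
      · exact comp_eq_of (by rw [List.length_take, List.length_take, hs, hv]) e1
      · rw [hldef]
        exact comp_eq_of (by rw [List.length_drop, List.length_drop, hs, hv]) e2
    · -- j' + 1 > m : use IH at l
      have hIHl := (IH l (by omega) (by omega)).1
      have hAj : comp (s.drop (j' + 1)) = comp (v.drop (j' + 1)) :=
        hXj.trans (hIHl.symm.trans hX0)
      exact stepA hIHl hAj
  have hbits : ∀ j, comp (s.take j) = comp (v.take j) := by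
    intro j
    rcases le_or_gt j (2 * m) with hle | hgt
    · exact (key j hle).1
    · rw [take_all s (by omega), take_all v (by omega)]
      exact hw
  exact eq_of_comp_take s v (by omega) hbits

def PF : ℕ → ℕ → Finset (List (Bool × Bool))
  | 0, _ => {[]}
  | l + 1, c =>
      ((PF l c).image (List.cons (false, false))) ∪
      ((PF l c).image (List.cons (true, true))) ∪
      ((PF l (c + 1)).image (List.cons (false, true))) ∪
      (if c = 0 then ∅ else (PF l (c - 1)).image (List.cons (true, false)))

lemma mem_PF_succ {l c : ℕ} {p : List (Bool × Bool)} (hp : p ∈ PF (l + 1) c) :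
    (∃ q ∈ PF l c, p = (false, false) :: q) ∨ (∃ q ∈ PF l c, p = (true, true) :: q) ∨
    (∃ q ∈ PF l (c + 1), p = (false, true) :: q) ∨
    (c ≠ 0 ∧ ∃ q ∈ PF l (c - 1), p = (true, false) :: q) := by
  rw [PF] at hp
  rcases Finset.mem_union.mp hp with hp' | hp4
  · rcases Finset.mem_union.mp hp' with hp'' | hp3
    · rcases Finset.mem_union.mp hp'' with hp1 | hp2
      · obtain ⟨q, hq, rfl⟩ := Finset.mem_image.mp hp1
        exact Or.inl ⟨q, hq, rfl⟩
      · obtain ⟨q, hq, rfl⟩ := Finset.mem_image.mp hp2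
        exact Or.inr (Or.inl ⟨q, hq, rfl⟩)
    · obtain ⟨q, hq, rfl⟩ := Finset.mem_image.mp hp3
      exact Or.inr (Or.inr (Or.inl ⟨q, hq, rfl⟩))
  · by_cases hc : c = 0
    · rw [if_pos hc] at hp4
      exact absurd hp4 (Finset.notMem_empty p)
    · rw [if_neg hc] at hp4
      obtain ⟨q, hq, rfl⟩ := Finset.mem_image.mp hp4
      exact Or.inr (Or.inr (Or.inr ⟨hc, q, hq, rfl⟩))

lemma PF_length : ∀ l c (p : List (Bool × Bool)), p ∈ PF l c → p.length = l := by
  intro l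
  induction l with
  | zero =>
    intro c p hp
    rw [PF, Finset.mem_singleton] at hp
    simp [hp]
  | succ l ih =>
    intro c p hp
    rcases mem_PF_succ hp with ⟨q, hq, rfl⟩ | ⟨q, hq, rfl⟩ | ⟨q, hq, rfl⟩ | ⟨_, q, hq, rfl⟩ <;>
      simp [ih _ _ hq]

lemma PF_dom : ∀ l c (p : List (Bool × Bool)), p ∈ PF l c → ∀ j,
    ((p.map Prod.fst).take j).count true ≤ c + ((p.map Prod.snd).take j).count true := by
  intro l
  induction l with
  | zero =>
    intro c p hp j
    rw [PF, Finset.mem_singleton] at hp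
    simp [hp]
  | succ l ih =>
    intro c p hp j
    cases j with
    | zero => simp
    | succ j =>
      rcases mem_PF_succ hp with ⟨q, hq, rfl⟩ | ⟨q, hq, rfl⟩ | ⟨q, hq, rfl⟩ | ⟨hc, q, hq, rfl⟩ <;>
        · have := ih _ _ hq j
          simp only [List.map_cons, List.take_succ_cons, List.count_cons] at *
          simp at *
          omega

lemma PF_card_succ (l c : ℕ) :
    (PF (l + 1) c).card = 2 * (PF l c).card + (PF l (c + 1)).card
      + (if c = 0 then 0 else (PF l (c - 1)).card) := by
  classical
  have hinj : ∀ hd : Bool × Bool, Function.Injective (List.cons hd) := by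
    intro hd x y hxy
    injection hxy
  have hdisj : ∀ (hd1 hd2 : Bool × Bool) (S T : Finset (List (Bool × Bool))), hd1 ≠ hd2 →
      Disjoint (S.image (List.cons hd1)) (T.image (List.cons hd2)) := by
    intro hd1 hd2 S T hne
    rw [Finset.disjoint_left]
    intro p hp1 hp2
    obtain ⟨q1, _, hq1⟩ := Finset.mem_image.mp hp1
    obtain ⟨q2, _, hq2⟩ := Finset.mem_image.mp hp2
    rw [← hq2] at hq1
    injection hq1 with h1 h2
    exact hne h1
  rw [PF]
  by_cases hc : c = 0
  · rw [if_pos hc, if_pos hc, Finset.union_empty]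
    rw [Finset.card_union_of_disjoint, Finset.card_union_of_disjoint]
    · rw [Finset.card_image_of_injective _ (hinj _),
        Finset.card_image_of_injective _ (hinj _),
        Finset.card_image_of_injective _ (hinj _)]
      omega
    · exact hdisj _ _ _ _ (by decide)
    · exact Finset.disjoint_union_left.mpr
        ⟨hdisj _ _ _ _ (by decide), hdisj _ _ _ _ (by decide)⟩
  · rw [if_neg hc, if_neg hc]
    rw [Finset.card_union_of_disjoint, Finset.card_union_of_disjoint,
      Finset.card_union_of_disjoint]
    · rw [Finset.card_image_of_injective _ (hinj _),
        Finset.card_image_of_injective _ (hinj _),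
        Finset.card_image_of_injective _ (hinj _),
        Finset.card_image_of_injective _ (hinj _)]
      omega
    · exact hdisj _ _ _ _ (by decide)
    · exact Finset.disjoint_union_left.mpr
        ⟨hdisj _ _ _ _ (by decide), hdisj _ _ _ _ (by decide)⟩
    · exact Finset.disjoint_union_left.mpr
        ⟨Finset.disjoint_union_left.mpr
          ⟨hdisj _ _ _ _ (by decide), hdisj _ _ _ _ (by decide)⟩,
         hdisj _ _ _ _ (by decide)⟩

def c2 (N : ℕ) (i : ℤ) : ℕ := if 0 ≤ i then N.choose i.toNat else 0

noncomputable def F (l c : ℕ) : ℕ := ∑ i ∈ Finset.Icc ((l : ℤ) - c) ((l : ℤ) + c + 1), c2 (2 * l) i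

lemma c2_pascal (N : ℕ) (i : ℤ) : c2 (N + 1) i = c2 N (i - 1) + c2 N i := by
  rcases lt_trichotomy i 0 with h | h | h
  · rw [c2, c2, c2, if_neg (by omega), if_neg (by omega), if_neg (by omega)]
  · subst h
    rw [c2, c2, c2, if_pos le_rfl, if_neg (by omega), if_pos le_rfl]
    simp
  · rw [c2, c2, c2, if_pos (by omega), if_pos (by omega), if_pos (by omega)]
    have e : i.toNat = (i - 1).toNat + 1 := by omega
    rw [e, Nat.choose_succ_succ]

lemma sum_shift (a b d : ℤ) (f : ℤ → ℕ) :
    ∑ i ∈ Finset.Icc (a + d) (b + d), f (i - d) = ∑ i ∈ Finset.Icc a b, f i := by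
  rw [← Finset.map_add_right_Icc a b d, Finset.sum_map]
  apply Finset.sum_congr rfl
  intro i _
  simp [addRightEmbedding]

lemma sum_Icc_top (a b : ℤ) (h : a ≤ b + 1) (f : ℤ → ℕ) :
    ∑ i ∈ Finset.Icc a (b + 1), f i = (∑ i ∈ Finset.Icc a b, f i) + f (b + 1) := by
  have he : Finset.Icc a (b + 1) = insert (b + 1) (Finset.Icc a b) := by
    ext x
    simp only [Finset.mem_Icc, Finset.mem_insert]
    omega
  rw [he, Finset.sum_insert (by simp [Finset.mem_Icc])]
  ring

lemma F_succ (l c : ℕ) : F (l + 1) c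
    = 2 * F l c + F l (c + 1) + (if c = 0 then 0 else F l (c - 1)) := by
  have hL : ((l + 1 : ℕ) : ℤ) - (c : ℕ) = ((l : ℤ) - c) + 1 := by push_cast; ring
  have hU : ((l + 1 : ℕ) : ℤ) + (c : ℕ) + 1 = ((l : ℤ) + c + 1) + 1 := by push_cast; ring
  have hN : 2 * (l + 1) = (2 * l + 1) + 1 := by ring
  rw [F, hL, hU, hN]
  have hpt : ∀ i ∈ Finset.Icc (((l : ℤ) - c) + 1) (((l : ℤ) + c + 1) + 1),
      c2 ((2 * l + 1) + 1) i
        = ((c2 (2 * l) (i - 2) + c2 (2 * l) (i - 1)) + (c2 (2 * l) (i - 1) + c2 (2 * l) i)) := by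
    intro i _
    rw [c2_pascal, c2_pascal, c2_pascal]
    have e : i - 1 - 1 = i - 2 := by ring
    rw [e]
  rw [Finset.sum_congr rfl hpt, Finset.sum_add_distrib, Finset.sum_add_distrib,
    Finset.sum_add_distrib]
  have hS1 : ∑ i ∈ Finset.Icc (((l : ℤ) - c) + 1) (((l : ℤ) + c + 1) + 1), c2 (2 * l) (i - 2)
      = ∑ i ∈ Finset.Icc ((l : ℤ) - c - 1) ((l : ℤ) + c), c2 (2 * l) i := by
    rw [show ((l : ℤ) - c) + 1 = ((l : ℤ) - c - 1) + 2 by ring,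
      show ((l : ℤ) + c + 1) + 1 = ((l : ℤ) + c) + 2 by ring]
    exact sum_shift _ _ 2 _
  have hS2 : ∑ i ∈ Finset.Icc (((l : ℤ) - c) + 1) (((l : ℤ) + c + 1) + 1), c2 (2 * l) (i - 1)
      = F l c := by
    rw [F]
    exact sum_shift _ _ 1 _
  have hFc1 : F l (c + 1)
      = (∑ i ∈ Finset.Icc ((l : ℤ) - c - 1) ((l : ℤ) + c), c2 (2 * l) i)
        + c2 (2 * l) ((l : ℤ) + c + 1) + c2 (2 * l) ((l : ℤ) + c + 2) := by
    rw [F, show ((l : ℤ) - ((c : ℕ) + 1 : ℕ)) = (l : ℤ) - c - 1 by push_cast; ring,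
      show ((l : ℤ) + ((c : ℕ) + 1 : ℕ) + 1) = ((l : ℤ) + c + 1) + 1 by push_cast; ring,
      sum_Icc_top _ _ (by omega), show (l : ℤ) + c + 1 = ((l : ℤ) + c) + 1 by ring,
      sum_Icc_top _ _ (by omega)]
    ring_nf
  have hD : ∑ i ∈ Finset.Icc (((l : ℤ) - c) + 1) (((l : ℤ) + c + 1) + 1), c2 (2 * l) i
      = (∑ i ∈ Finset.Icc ((l : ℤ) - c + 1) ((l : ℤ) + c), c2 (2 * l) i)
        + c2 (2 * l) ((l : ℤ) + c + 1) + c2 (2 * l) ((l : ℤ) + c + 2) := by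
    rw [show ((l : ℤ) + c + 1) + 1 = ((l : ℤ) + c + 1) + 1 from rfl,
      sum_Icc_top _ _ (by omega), show (l : ℤ) + c + 1 = ((l : ℤ) + c) + 1 by ring,
      sum_Icc_top _ _ (by omega)]
    ring_nf
  have hE : ∑ i ∈ Finset.Icc ((l : ℤ) - c + 1) ((l : ℤ) + c), c2 (2 * l) i
      = (if c = 0 then 0 else F l (c - 1)) := by
    by_cases hc : c = 0
    · subst hc
      rw [if_pos rfl, Finset.Icc_eq_empty (by omega), Finset.sum_empty]
    · rw [if_neg hc, F]
      have h1 : 1 ≤ c := Nat.one_le_iff_ne_zero.mpr hc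
      rw [show ((l : ℤ) - ((c - 1 : ℕ) : ℤ)) = (l : ℤ) - c + 1 by
          rw [Nat.cast_sub h1]; push_cast; ring,
        show ((l : ℤ) + ((c - 1 : ℕ) : ℤ) + 1) = (l : ℤ) + c by
          rw [Nat.cast_sub h1]; push_cast; ring]
  rw [hS1, hS2, hD, ← hE]
  omega

lemma F_zero (c : ℕ) : F 0 c = 1 := by
  rw [F]
  rw [Finset.sum_eq_single (0 : ℤ)]
  · rw [c2, if_pos le_rfl]
    rfl
  · intro i hi hne
    rcases lt_or_gt_of_ne hne with h | h
    · rw [c2, if_neg (by omega)]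
    · rw [c2, if_pos (by omega)]
      obtain ⟨t, ht⟩ : ∃ t, i.toNat = t + 1 := ⟨i.toNat - 1, by omega⟩
      rw [ht]
      exact Nat.choose_zero_succ t
  · intro h0
    exfalso
    apply h0
    simp only [Finset.mem_Icc]
    constructor <;> push_cast <;> omega

lemma PF_card : ∀ l c, (PF l c).card = F l c := by
  intro l
  induction l with
  | zero =>
    intro c
    rw [PF, F_zero, Finset.card_singleton]
  | succ l ih =>
    intro c
    rw [PF_card_succ, F_succ, ih, ih]
    by_cases hc : c = 0
    · rw [if_pos hc, if_pos hc]
    · rw [if_neg hc, if_neg hc, ih]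

lemma F_ge (m : ℕ) : Nat.centralBinom m ≤ F m 0 := by
  rw [F]
  rw [show ((m : ℤ) - (0 : ℕ)) = (m : ℤ) by push_cast; ring,
    show ((m : ℤ) + (0 : ℕ) + 1) = (m : ℤ) + 1 by push_cast; ring,
    sum_Icc_top _ _ (by omega), Finset.Icc_self, Finset.sum_singleton]
  have h1 : c2 (2 * m) (m : ℤ) = Nat.centralBinom m := by
    rw [c2, if_pos (by positivity), Int.toNat_natCast]
    exact (Nat.centralBinom_eq_two_mul_choose m).symm
  rw [h1]
  exact Nat.le_add_right _ _

def enc (p : List (Bool × Bool)) : List Bool := p.map Prod.fst ++ (p.map Prod.snd).reverse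

lemma enc_length {p : List (Bool × Bool)} : (enc p).length = 2 * p.length := by
  simp [enc]
  omega

lemma map_fst_snd_inj : ∀ (p q : List (Bool × Bool)),
    p.map Prod.fst = q.map Prod.fst → p.map Prod.snd = q.map Prod.snd → p = q := by
  intro p
  induction p with
  | nil =>
    intro q h1 _
    cases q with
    | nil => rfl
    | cons b u => simp at h1
  | cons a t ih =>
    intro q h1 h2
    cases q with
    | nil => simp at h1
    | cons b u =>
      simp only [List.map_cons, List.cons.injEq] at h1 h2
      rw [ih u h1.2 h2.2, show a = b from Prod.ext h1.1 h2.1]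

lemma enc_inj {p q : List (Bool × Bool)} (hl : p.length = q.length) (h : enc p = enc q) :
    p = q := by
  have hlen : (p.map Prod.fst).length = (q.map Prod.fst).length := by simp [hl]
  have h1 : p.map Prod.fst = q.map Prod.fst := by
    have h' := congrArg (List.take (p.map Prod.fst).length) h
    rw [enc, enc, List.take_left, hlen, List.take_left] at h'
    exact h'
  have h2 : p.map Prod.snd = q.map Prod.snd := by
    have h' := congrArg (List.drop (p.map Prod.fst).length) h
    rw [enc, enc, List.drop_left, hlen, List.drop_left] at h'
    exact List.reverse_injective h'
  exact map_fst_snd_inj p q h1 h2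

lemma enc_code {m : ℕ} {p : List (Bool × Bool)} (hlp : p.length = m)
    (hdom : ∀ j, ((p.map Prod.fst).take j).count true
      ≤ 0 + ((p.map Prod.snd).take j).count true) :
    ∀ j ≤ m, ((enc p).take j).count true ≤ ((enc p).drop (2 * m - j)).count true := by
  intro j hj
  have hf : (p.map Prod.fst).length = m := by simp [hlp]
  have h1 : (enc p).take j = (p.map Prod.fst).take j :=
    List.take_append_of_le_length (by omega)
  have h2 : (enc p).drop (2 * m - j) = ((p.map Prod.snd).reverse).drop (m - j) := by
    rw [enc, show 2 * m - j = (p.map Prod.fst).length + (m - j) by rw [hf]; omega,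
      List.drop_append]
    simp
  have h3 : ((p.map Prod.snd).take j).reverse = ((p.map Prod.snd).reverse).drop (m - j) := by
    rw [List.reverse_take]
    congr 1
    simp [hlp]
  rw [h1, h2, ← h3, List.count_reverse]
  simpa using hdom j

lemma cb_bound : ∀ m : ℕ, 1 ≤ m → 16 ^ m ≤ 4 * m * Nat.centralBinom m ^ 2 := by
  intro m
  induction m with
  | zero => omega
  | succ p ih =>
    intro _
    rcases Nat.eq_zero_or_pos p with rfl | hp
    · decide
    · have h := ih hp
      have key := Nat.succ_mul_centralBinom_succ p
      have hpos : 0 < (p + 1) ^ 2 := by positivity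
      have hgoal : (p + 1) ^ 2 * (16 ^ (p + 1))
          ≤ (p + 1) ^ 2 * (4 * (p + 1) * Nat.centralBinom (p + 1) ^ 2) := by
        have e1 : (p + 1) ^ 2 * (4 * (p + 1) * Nat.centralBinom (p + 1) ^ 2)
            = 4 * (p + 1) * ((p + 1) * Nat.centralBinom (p + 1)) ^ 2 := by ring
        rw [e1, key]
        have e2 : 4 * (p + 1) * (2 * (2 * p + 1) * Nat.centralBinom p) ^ 2
            = 16 * ((p + 1) * (2 * p + 1) ^ 2) * Nat.centralBinom p ^ 2 := by ring
        rw [e2]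
        calc (p + 1) ^ 2 * 16 ^ (p + 1) = 16 * (p + 1) ^ 2 * 16 ^ p := by ring
          _ ≤ 16 * (p + 1) ^ 2 * (4 * p * Nat.centralBinom p ^ 2) := by
              exact Nat.mul_le_mul_left _ h
          _ = 16 * ((p + 1) ^ 2 * 4 * p) * Nat.centralBinom p ^ 2 := by ring
          _ ≤ 16 * ((p + 1) * (2 * p + 1) ^ 2) * Nat.centralBinom p ^ 2 := by
              have : (p + 1) ^ 2 * 4 * p ≤ (p + 1) * (2 * p + 1) ^ 2 := by nlinarith
              exact Nat.mul_le_mul_right _ (Nat.mul_le_mul_left _ this)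
      exact Nat.le_of_mul_le_mul_left hgoal hpos

end RCA


/-- For every `k ≥ 8` there exist `n ≤ k + (1/2)·log₂ k + 5` and a
reconstruction code `C ⊆ {0,1}ⁿ` with `|C| ≥ 2^k`: the map `s ↦ C(s)` is injective on `C`. -/
theorem reconstruction_code_exists (k : ℕ) (hk : 8 ≤ k) :
    ∃ n : ℕ, (n : ℝ) ≤ (k : ℝ) + (1 / 2) * Real.logb 2 (k : ℝ) + 5 ∧
      ∃ C : Set (List Bool),
        (∀ s ∈ C, s.length = n) ∧
        2 ^ k ≤ C.ncard ∧
        (∀ s ∈ C, ∀ v ∈ C, compMS s = compMS v → s = v) := by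
  classical
  set c := Nat.clog 2 k with hcdef
  set r := (c + 1) / 2 with hrdef
  set m := (k + 4 + r) / 2 with hmdef
  have hc1 : 2 ^ (c - 1) < k := Nat.pow_pred_clog_lt_self (by norm_num) (by omega)
  have hck : k ≤ 2 ^ c := Nat.le_pow_clog (by norm_num) k
  have hc0 : 1 ≤ c := by
    by_contra hcon
    have : c = 0 := by omega
    rw [this] at hck
    simp at hck
    omega
  have hlt2 : c - 1 < 2 ^ (c - 1) := Nat.lt_two_pow_self
  have hkc : c < k := by omega
  have hmk : m ≤ k := by omega
  have hm1 : 1 ≤ m := by omega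
  -- size chain
  have hm4r : m ≤ 4 ^ r := by
    have h1 : 2 ^ c ≤ 2 ^ (2 * r) := Nat.pow_le_pow_right (by norm_num) (by omega)
    have h2 : (2 : ℕ) ^ (2 * r) = 4 ^ r := by
      rw [show (4 : ℕ) = 2 ^ 2 from rfl, ← pow_mul]
    omega
  have e4 : ((2 : ℕ) ^ k) ^ 2 = 4 ^ k := by
    rw [show (4 : ℕ) = 2 ^ 2 from rfl, ← pow_mul, ← pow_mul, Nat.mul_comm]
  have hmain : 4 * m * ((2 : ℕ) ^ k) ^ 2 ≤ 16 ^ m := by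
    rw [e4]
    calc 4 * m * 4 ^ k ≤ 4 * 4 ^ r * 4 ^ k := by
          have := Nat.mul_le_mul_right (4 ^ k) (Nat.mul_le_mul_left 4 hm4r)
          exact this
      _ ≤ 64 * 4 ^ r * 4 ^ k := by
          have h4 : (4 : ℕ) * 4 ^ r ≤ 64 * 4 ^ r := Nat.mul_le_mul_right _ (by norm_num)
          exact Nat.mul_le_mul_right _ h4
      _ = 4 ^ (k + 3 + r) := by
          rw [pow_add, pow_add]
          ring
      _ ≤ 4 ^ (2 * m) := Nat.pow_le_pow_right (by norm_num) (by omega)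
      _ = 16 ^ m := by rw [show (16 : ℕ) = 4 ^ 2 from rfl, ← pow_mul, Nat.mul_comm]
  have hsize : 2 ^ k ≤ Nat.centralBinom m := by
    by_contra hlt
    push_neg at hlt
    have h1 := RCA.cb_bound m hm1
    have h2 : Nat.centralBinom m ^ 2 < ((2 : ℕ) ^ k) ^ 2 :=
      Nat.pow_lt_pow_left hlt (by norm_num)
    have h3 : 4 * m * Nat.centralBinom m ^ 2 < 4 * m * ((2 : ℕ) ^ k) ^ 2 :=
      (Nat.mul_lt_mul_left (by omega : 0 < 4 * m)).mpr h2
    omega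
  -- the code
  refine ⟨2 * m, ?_, ?_⟩
  · -- real bound
    have hrc : (r : ℝ) ≤ ((c : ℝ) + 1) / 2 := by
      have : (2 * r : ℕ) ≤ c + 1 := by omega
      have h' : (2 * r : ℝ) ≤ (c : ℝ) + 1 := by exact_mod_cast this
      linarith
    have hcR : (c : ℝ) ≤ Real.logb 2 (k : ℝ) + 1 := by
      have h1 : ((2 : ℝ)) ^ (c - 1 : ℕ) ≤ (k : ℝ) := by
        have : (2 : ℕ) ^ (c - 1) ≤ k := le_of_lt hc1
        exact_mod_cast this
      have h2 : Real.logb 2 ((2 : ℝ) ^ (c - 1 : ℕ)) ≤ Real.logb 2 (k : ℝ) :=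
        Real.logb_le_logb_of_le (by norm_num) (by positivity) h1
      have hlb : Real.logb 2 2 = 1 := Real.logb_self_eq_one (by norm_num)
      rw [Real.logb_pow, hlb] at h2
      have h3 : ((c - 1 : ℕ) : ℝ) = (c : ℝ) - 1 := by
        rw [Nat.cast_sub hc0]
        norm_num
      rw [h3] at h2
      linarith [h2]
    have hb : (2 * m : ℕ) ≤ k + 4 + r := by omega
    have hbR : ((2 * m : ℕ) : ℝ) ≤ (k : ℝ) + 4 + (r : ℝ) := by exact_mod_cast hb
    push_cast at hbR ⊢
    linarith
  · refine ⟨(((RCA.PF m 0).image RCA.enc : Finset (List Bool)) : Set (List Bool)), ?_, ?_, ?_⟩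
    · intro s hs
      rw [Finset.mem_coe, Finset.mem_image] at hs
      obtain ⟨p, hp, rfl⟩ := hs
      rw [RCA.enc_length, RCA.PF_length m 0 p hp]
    · rw [Set.ncard_coe_finset, Finset.card_image_of_injOn, RCA.PF_card m 0]
      · exact le_trans hsize (RCA.F_ge m)
      · intro p hp q hq h
        exact RCA.enc_inj (by rw [RCA.PF_length m 0 p hp, RCA.PF_length m 0 q hq]) h
    · intro s hs v hv hMS
      rw [Finset.mem_coe, Finset.mem_image] at hs hv
      obtain ⟨p, hp, rfl⟩ := hs
      obtain ⟨q, hq, rfl⟩ := hv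
      exact RCA.main_inj m (RCA.enc p) (RCA.enc q)
        (by rw [RCA.enc_length, RCA.PF_length m 0 p hp])
        (by rw [RCA.enc_length, RCA.PF_length m 0 q hq])
        (RCA.enc_code (RCA.PF_length m 0 p hp) (RCA.PF_dom m 0 p hp))
        (RCA.enc_code (RCA.PF_length m 0 q hq) (RCA.PF_dom m 0 q hq))
        hMS
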